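/- Let Φ = {φ_k}_{k=1}^{M} be a frame for ℝ^N and put m := dim span X_Φ, where X_Φ := {φ_k φ_k^T : k = 1,...,M} ⊂ the space of real symmetric N×N matrices. Then Φ is scalable if and only if Φ is m-scalable. -/

import Mathlib

open scoped BigOperators

namespace ScalableFrames

/-- The Euclidean dot product on `Fin n → ℝ`. -/
def dot {n : ℕ} (x y : Fin n → ℝ) : ℝ := ∑ i, x i * y i

/-- `Φ = {φ_k}_{k=1}^M` is a frame for `ℝ^N`:
there are `0 < A, B` with `A‖x‖² ≤ ∑_k ⟨x, φ_k⟩² ≤ B‖x‖²` for all `x`. -/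
def IsFrame {M N : ℕ} (Φ : Fin M → Fin N → ℝ) : Prop :=
  ∃ A B : ℝ, 0 < A ∧ 0 < B ∧ ∀ x : Fin N → ℝ,
    A * dot x x ≤ ∑ k, dot x (Φ k) ^ 2 ∧ ∑ k, dot x (Φ k) ^ 2 ≤ B * dot x x

/-- `Φ` is a tight frame for `ℝ^N` (the frame inequality holds with `A = B > 0`). -/
def IsTight {M N : ℕ} (Φ : Fin M → Fin N → ℝ) : Prop :=
  ∃ A : ℝ, 0 < A ∧ ∀ x : Fin N → ℝ, ∑ k, dot x (Φ k) ^ 2 = A * dot x x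

/-- The subfamily `{φ_i}_{i ∈ I}` is a tight frame for `ℝ^N`. -/
def IsTightOn {M N : ℕ} (Φ : Fin M → Fin N → ℝ) (I : Finset (Fin M)) : Prop :=
  ∃ A : ℝ, 0 < A ∧ ∀ x : Fin N → ℝ, ∑ k ∈ I, dot x (Φ k) ^ 2 = A * dot x x

/-- `Φ` is scalable: nonnegative scalars `c_k` make `{c_k φ_k}` a tight frame. -/
def IsScalable {M N : ℕ} (Φ : Fin M → Fin N → ℝ) : Prop :=
  ∃ c : Fin M → ℝ, (∀ k, 0 ≤ c k) ∧ IsTight fun k => c k • Φ k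

/-- `Φ` is strictly scalable: strictly positive scalars `c_k` make `{c_k φ_k}` a tight frame. -/
def IsStrictlyScalable {M N : ℕ} (Φ : Fin M → Fin N → ℝ) : Prop :=
  ∃ c : Fin M → ℝ, (∀ k, 0 < c k) ∧ IsTight fun k => c k • Φ k

/-- `Φ` is `m`-scalable: some subset `I` of size `m` admits nonnegative scalars `(c_i)_{i∈I}`
making `{c_i φ_i}_{i∈I}` a tight frame for `ℝ^N`. -/
def IsMScalable {M N : ℕ} (Φ : Fin M → Fin N → ℝ) (m : ℕ) : Prop :=
  ∃ I : Finset (Fin M), I.card = m ∧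
    ∃ c : Fin M → ℝ, (∀ i ∈ I, 0 ≤ c i) ∧ IsTightOn (fun k => c k • Φ k) I

/-- `Φ` is strictly `m`-scalable: some subset `I` of size `m` admits strictly positive scalars
`(c_i)_{i∈I}` making `{c_i φ_i}_{i∈I}` a tight frame for `ℝ^N`. -/
def IsStrictlyMScalable {M N : ℕ} (Φ : Fin M → Fin N → ℝ) (m : ℕ) : Prop :=
  ∃ I : Finset (Fin M), I.card = m ∧
    ∃ c : Fin M → ℝ, (∀ i ∈ I, 0 < c i) ∧ IsTightOn (fun k => c k • Φ k) I

/-- The rank-one outer product `φφᵀ` as an `N×N` matrix. -/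
def outer {N : ℕ} (φ : Fin N → ℝ) : Matrix (Fin N) (Fin N) ℝ := Matrix.vecMulVec φ φ

/-- `d = (N-1)(N+2)/2`. -/
def Fdim (N : ℕ) : ℕ := (N - 1) * (N + 2) / 2

/-- The map `F : ℝ^N → ℝ^d` obtained by stacking the blocks
`F_0(x) = (x_1²-x_2², …, x_1²-x_N²)` and `F_k(x) = (x_k x_{k+1}, …, x_k x_N)`, `k = 1,…,N-1`;
in `1`-based indexing the entry `x_k x_ℓ` sits at position `k(2N-1-k)/2 + ℓ - 1`. -/
def Fmap {N : ℕ} (x : Fin N → ℝ) : Fin (Fdim N) → ℝ := fun j =>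
  (if h : j.val + 1 < N then x ⟨0, by omega⟩ ^ 2 - x ⟨j.val + 1, h⟩ ^ 2 else 0) +
  ∑ a : Fin N, ∑ b : Fin N,
    if a.val < b.val ∧ j.val + 1 = (a.val + 1) * (2 * N - 2 - a.val) / 2 + b.val
    then x a * x b else 0

open Classical in
/-- `‖u‖₀`, the number of nonzero entries of `u`. -/
noncomputable def zeroNorm {n : ℕ} (u : Fin n → ℝ) : ℕ :=
  (Finset.univ.filter fun i => u i ≠ 0).card

lemma dot_smul_right {n : ℕ} (x y : Fin n → ℝ) (c : ℝ) : dot x (c • y) = c * dot x y := by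
  simp [dot, Finset.mul_sum, mul_left_comm]

/-- Carathéodory theorem for conical combinations: any nonnegative combination of a family
can be rewritten as a nonnegative combination over a subset on which the family is
linearly independent. -/
lemma caratheodory_cone {ι V : Type*} [Fintype ι] [DecidableEq ι] [AddCommGroup V] [Module ℝ V]
    (S : ι → V) :
    ∀ (s : Finset ι) (w : ι → ℝ), (∀ k ∈ s, 0 ≤ w k) →
      ∃ t, t ⊆ s ∧ ∃ w' : ι → ℝ, (∀ k ∈ t, 0 ≤ w' k) ∧
        (∑ k ∈ t, w' k • S k = ∑ k ∈ s, w k • S k) ∧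
        LinearIndependent ℝ (fun i : t => S (i : ι)) := by
  classical
  intro s
  induction s using Finset.strongInduction with
  | _ s ih =>
    intro w hw
    by_cases hli : LinearIndependent ℝ (fun i : s => S (i : ι))
    · exact ⟨s, le_refl _, w, hw, rfl, hli⟩
    · obtain ⟨g, hg0, i₁, hi₁⟩ := Fintype.not_linearIndependent_iff.mp hli
      set G0 : ι → ℝ := fun k => if h : k ∈ s then g ⟨k, h⟩ else 0 with hG0
      have hsum0 : ∑ k ∈ s, G0 k • S k = 0 := by
        rw [← Finset.sum_attach s (fun k => G0 k • S k), ← hg0, Finset.univ_eq_attach]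
        refine Finset.sum_congr rfl fun i _ => ?_
        simp [G0, i.2]
      have hne : G0 (i₁ : ι) ≠ 0 := by simpa [G0, i₁.2] using hi₁
      have hpos : ∃ G : ι → ℝ, ∑ k ∈ s, G k • S k = 0 ∧ ∃ k, k ∈ s ∧ 0 < G k := by
        rcases hne.lt_or_gt with h | h
        · refine ⟨fun k => -G0 k, ?_, (i₁ : ι), i₁.2, by show (0:ℝ) < -G0 (i₁ : ι); linarith⟩
          simp only [neg_smul]
          rw [Finset.sum_neg_distrib, hsum0, neg_zero]
        · exact ⟨G0, hsum0, (i₁ : ι), i₁.2, h⟩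
      obtain ⟨G, hGsum, k₁, hk₁s, hk₁pos⟩ := hpos
      set T := s.filter (fun k => 0 < G k) with hT
      have hTne : T.Nonempty := ⟨k₁, Finset.mem_filter.mpr ⟨hk₁s, hk₁pos⟩⟩
      obtain ⟨k₀, hk₀T, hmin⟩ := Finset.exists_min_image T (fun k => w k / G k) hTne
      have hk₀s : k₀ ∈ s := (Finset.mem_filter.mp hk₀T).1
      have hGk₀ : 0 < G k₀ := (Finset.mem_filter.mp hk₀T).2
      set t0 := w k₀ / G k₀ with ht0def
      have ht0 : 0 ≤ t0 := div_nonneg (hw _ hk₀s) hGk₀.le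
      set w1 : ι → ℝ := fun k => w k - t0 * G k with hw1def
      have hw1k₀ : w1 k₀ = 0 := by
        simp only [w1, t0]
        field_simp
        ring
      have hw1 : ∀ k ∈ s, 0 ≤ w1 k := by
        intro k hk
        by_cases hGk : 0 < G k
        · have h1 : t0 ≤ w k / G k := hmin k (Finset.mem_filter.mpr ⟨hk, hGk⟩)
          have h2 : t0 * G k ≤ w k := (le_div_iff₀ hGk).mp h1
          simp only [w1]; linarith
        · push_neg at hGk
          have h1 : t0 * G k ≤ 0 := mul_nonpos_of_nonneg_of_nonpos ht0 hGk
          have h2 := hw k hk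
          simp only [w1]; linarith
      have hsum1 : ∑ k ∈ s.erase k₀, w1 k • S k = ∑ k ∈ s, w k • S k := by
        rw [Finset.sum_erase s (by rw [hw1k₀, zero_smul])]
        have h3 : ∑ k ∈ s, w1 k • S k = ∑ k ∈ s, w k • S k - t0 • ∑ k ∈ s, G k • S k := by
          rw [Finset.smul_sum, ← Finset.sum_sub_distrib]
          refine Finset.sum_congr rfl fun k _ => ?_
          simp [w1, sub_smul, smul_smul]
        rw [h3, hGsum, smul_zero, sub_zero]
      obtain ⟨t, hts, w', hw'0, hw'sum, hli'⟩ :=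
        ih (s.erase k₀) (Finset.erase_ssubset hk₀s) w1
          (fun k hk => hw1 k (Finset.mem_of_mem_erase hk))
      exact ⟨t, hts.trans (Finset.erase_subset _ _), w', hw'0, by rw [hw'sum, hsum1], hli'⟩

/-- The bilinear form `(x, y) ↦ xᵀ T y`. -/
def bform {N : ℕ} (T : Matrix (Fin N) (Fin N) ℝ) (x y : Fin N → ℝ) : ℝ :=
  ∑ i, ∑ j, T i j * x i * y j

lemma bform_outer {N : ℕ} (φ x : Fin N → ℝ) : bform (outer φ) x x = dot x φ ^ 2 := by
  simp only [bform, outer, Matrix.vecMulVec_apply, dot]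
  rw [sq, Finset.sum_mul_sum]
  exact Finset.sum_congr rfl fun i _ => Finset.sum_congr rfl fun j _ => by ring

lemma bform_one {N : ℕ} (x : Fin N → ℝ) : bform 1 x x = dot x x := by
  simp [bform, Matrix.one_apply, ite_mul, dot, Finset.sum_ite_eq]

lemma bform_add {N : ℕ} (T T' : Matrix (Fin N) (Fin N) ℝ) (x y : Fin N → ℝ) :
    bform (T + T') x y = bform T x y + bform T' x y := by
  simp only [bform, Matrix.add_apply]
  rw [← Finset.sum_add_distrib]
  refine Finset.sum_congr rfl fun i _ => ?_
  rw [← Finset.sum_add_distrib]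
  exact Finset.sum_congr rfl fun j _ => by ring

lemma bform_zero {N : ℕ} (x y : Fin N → ℝ) : bform (0 : Matrix (Fin N) (Fin N) ℝ) x y = 0 := by
  simp [bform]

lemma bform_smul {N : ℕ} (c : ℝ) (T : Matrix (Fin N) (Fin N) ℝ) (x y : Fin N → ℝ) :
    bform (c • T) x y = c * bform T x y := by
  simp only [bform, Matrix.smul_apply, smul_eq_mul, Finset.mul_sum]
  exact Finset.sum_congr rfl fun i _ => Finset.sum_congr rfl fun j _ => by ring

lemma bform_sub {N : ℕ} (T T' : Matrix (Fin N) (Fin N) ℝ) (x y : Fin N → ℝ) :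
    bform (T - T') x y = bform T x y - bform T' x y := by
  simp only [bform, Matrix.sub_apply]
  rw [← Finset.sum_sub_distrib]
  refine Finset.sum_congr rfl fun i _ => ?_
  rw [← Finset.sum_sub_distrib]
  exact Finset.sum_congr rfl fun j _ => by ring

lemma bform_finsum {N : ℕ} {ι : Type*} (s : Finset ι) (T : ι → Matrix (Fin N) (Fin N) ℝ)
    (x y : Fin N → ℝ) : bform (∑ k ∈ s, T k) x y = ∑ k ∈ s, bform (T k) x y := by
  classical
  induction s using Finset.induction with
  | empty => simp [bform]
  | insert _ _ h ih => rw [Finset.sum_insert h, Finset.sum_insert h, bform_add, ih]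

lemma bform_add_left {N : ℕ} (T : Matrix (Fin N) (Fin N) ℝ) (x x' y : Fin N → ℝ) :
    bform T (x + x') y = bform T x y + bform T x' y := by
  simp only [bform, Pi.add_apply]
  rw [← Finset.sum_add_distrib]
  refine Finset.sum_congr rfl fun i _ => ?_
  rw [← Finset.sum_add_distrib]
  exact Finset.sum_congr rfl fun j _ => by ring

lemma bform_add_right {N : ℕ} (T : Matrix (Fin N) (Fin N) ℝ) (x y y' : Fin N → ℝ) :
    bform T x (y + y') = bform T x y + bform T x y' := by
  simp only [bform, Pi.add_apply]
  rw [← Finset.sum_add_distrib]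
  refine Finset.sum_congr rfl fun i _ => ?_
  rw [← Finset.sum_add_distrib]
  exact Finset.sum_congr rfl fun j _ => by ring

/-- A symmetric matrix whose quadratic form vanishes identically is zero. -/
lemma eq_zero_of_bform {N : ℕ} (T : Matrix (Fin N) (Fin N) ℝ)
    (hs : ∀ i j, T i j = T j i) (h : ∀ x, bform T x x = 0) : T = 0 := by
  have hsym : ∀ x y, bform T x y = bform T y x := by
    intro x y
    simp only [bform]
    rw [Finset.sum_comm]
    exact Finset.sum_congr rfl fun i _ => Finset.sum_congr rfl fun j _ => by rw [hs j i]; ring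
  have hb : ∀ x y, bform T x y = 0 := by
    intro x y
    have h1 := h (x + y)
    rw [bform_add_left, bform_add_right, bform_add_right, h x, h y, hsym y x] at h1
    linarith
  ext i j
  have h2 := hb (Pi.single i 1) (Pi.single j 1)
  simp only [bform, Pi.single_apply, mul_ite, ite_mul, mul_one, mul_zero, one_mul, zero_mul,
    Finset.sum_ite_eq, Finset.mem_univ, if_true] at h2
  simpa using h2

/-- Let `Φ = {φ_k}_{k=1}^M` be a frame for `ℝ^N` and put
`m := dim span {φ_k φ_kᵀ : k ∈ [M]}`. Then `Φ` is scalable iff `Φ` is `m`-scalable. -/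
theorem statement5 {M N : ℕ} (Φ : Fin M → Fin N → ℝ) (hframe : IsFrame Φ) (m : ℕ)
    (hm : m = Module.finrank ℝ (Submodule.span ℝ (Set.range fun k => outer (Φ k)))) :
    IsScalable Φ ↔ IsMScalable Φ m := by
  classical
  constructor
  · rintro ⟨c, hc0, A, hA, hTight⟩
    set S : Fin M → Matrix (Fin N) (Fin N) ℝ := fun k => outer (Φ k) with hS
    have hT' : ∀ x, ∑ k, (c k ^ 2) * dot x (Φ k) ^ 2 = A * dot x x := by
      intro x
      rw [← hTight x]
      exact Finset.sum_congr rfl fun k _ => by rw [dot_smul_right]; ring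
    -- turn the quadratic-form identity into a matrix identity
    have hmat : ∑ k, (c k ^ 2) • S k = A • (1 : Matrix (Fin N) (Fin N) ℝ) := by
      have hz : (∑ k, (c k ^ 2) • S k) - A • (1 : Matrix (Fin N) (Fin N) ℝ) = 0 := by
        apply eq_zero_of_bform
        · intro i j
          simp only [Matrix.sub_apply, Matrix.sum_apply, Matrix.smul_apply, Matrix.one_apply,
            smul_eq_mul, hS, outer, Matrix.vecMulVec_apply]
          rw [show (if i = j then (1:ℝ) else 0) = (if j = i then (1:ℝ) else 0) by
            simp [eq_comm]]
          refine congrArg (· - _) (Finset.sum_congr rfl fun k _ => by ring)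
        · intro x
          rw [bform_sub, bform_smul, bform_one, bform_finsum]
          have : ∀ k ∈ Finset.univ, bform ((c k ^ 2) • S k) x x = (c k ^ 2) * dot x (Φ k) ^ 2 :=
            fun k _ => by rw [bform_smul, hS, bform_outer]
          rw [Finset.sum_congr rfl this, hT' x, sub_self]
      exact sub_eq_zero.mp hz
    -- conic Carathéodory
    obtain ⟨t, -, w', hw'0, hw'sum, hli'⟩ :=
      caratheodory_cone S Finset.univ (fun k => c k ^ 2) (fun k _ => sq_nonneg _)
    rw [hmat] at hw'sum
    -- the subset has at most `m` elements
    have hfd : FiniteDimensional ℝ (Submodule.span ℝ (Set.range fun k => outer (Φ k))) :=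
      FiniteDimensional.span_of_finite ℝ (Set.finite_range _)
    have hcard : t.card ≤ m := by
      rw [hm]
      have h1 : Module.finrank ℝ (Submodule.span ℝ (Set.range fun i : t => S (i : Fin M)))
          = t.card := by
        rw [finrank_span_eq_card hli', Fintype.card_coe]
      rw [← h1]
      refine Submodule.finrank_mono (Submodule.span_mono ?_)
      rintro _ ⟨i, rfl⟩
      exact ⟨(i : Fin M), rfl⟩
    have hmM : m ≤ M := by
      rw [hm]
      have h2 := finrank_span_finset_le_card (R := ℝ)
        (Finset.univ.image fun k : Fin M => outer (Φ k))
      unfold Set.finrank at h2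
      rw [Finset.coe_image, Finset.coe_univ, Set.image_univ] at h2
      calc Module.finrank ℝ (Submodule.span ℝ (Set.range fun k => outer (Φ k)))
          ≤ (Finset.univ.image fun k : Fin M => outer (Φ k)).card := h2
        _ ≤ Finset.univ.card := Finset.card_image_le
        _ = M := by simp
    obtain ⟨u, htu, hu⟩ := Finset.exists_superset_card_eq hcard (by simpa using hmM)
    refine ⟨u, hu, fun k => if k ∈ t then Real.sqrt (w' k) else 0, fun i _ => ?_, A, hA,
      fun x => ?_⟩
    · by_cases h : i ∈ t <;> simp [h, Real.sqrt_nonneg]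
    · have hstep : ∑ k ∈ u, dot x ((if k ∈ t then Real.sqrt (w' k) else 0) • Φ k) ^ 2
          = ∑ k ∈ t, w' k * dot x (Φ k) ^ 2 := by
        rw [← Finset.sum_subset htu
          (fun k _ hk => by rw [dot_smul_right, if_neg hk, zero_mul]; ring)]
        refine Finset.sum_congr rfl fun k hk => ?_
        rw [dot_smul_right, if_pos hk, mul_pow, Real.sq_sqrt (hw'0 k hk)]
      rw [hstep]
      have hq := congrArg (fun T => bform T x x) hw'sum
      rw [bform_finsum, bform_smul, bform_one] at hq
      rw [← hq]
      exact Finset.sum_congr rfl fun k _ => by rw [bform_smul, hS, bform_outer]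
  · rintro ⟨I, hIcard, c, hc0, A, hA, hT⟩
    refine ⟨fun k => if k ∈ I then c k else 0, fun k => ?_, A, hA, fun x => ?_⟩
    · by_cases h : k ∈ I <;> simp [h]
      exact hc0 k h
    · have hzero : ∀ k ∈ Finset.univ, k ∉ I → dot x ((if k ∈ I then c k else 0) • Φ k) ^ 2 = 0 :=
        fun k _ hk => by rw [dot_smul_right, if_neg hk, zero_mul]; ring
      rw [← Finset.sum_subset (Finset.subset_univ I) hzero, ← hT x]
      exact Finset.sum_congr rfl fun k hk => by rw [if_pos hk]

end ScalableFrames
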